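/- For every a ∈ ℂ and every z ∈ ℂ with z ≠ 0 and D_a(z) ≠ 0, the derivative of R_a at z equals 0 if and only if z³ = 1 or a·(a+1)·z³ = 15 − 8a + a². (In particular, for a ∉ {0,3} the free critical points of R_a are exactly the three cube roots of (15−8a+a²)/(a(a+1)).) -/

import Mathlib

/-- The rational map `R_a` obtained from the Chebyshev–Halley method applied to `z^3-1`. -/
noncomputable def Ra (a z : ℂ) : ℂ :=
  (2*a*z^6 + (15 - a)*z^3 + (3 - a)) / (3*z^2*(5 - a + (1 + a)*z^3))

/-- The denominator of `R_a`. -/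
noncomputable def Da (a z : ℂ) : ℂ := 3*z^2*(5 - a + (1 + a)*z^3)

/-- For `z ≠ 0` with `D_a(z) ≠ 0`, the derivative of `R_a` vanishes at `z` if and only if
`z³ = 1` or `a(a+1)z³ = 15 - 8a + a²`. -/
theorem stmt_4 (a z : ℂ) (hz : z ≠ 0) (hD : Da a z ≠ 0) :
    deriv (Ra a) z = 0 ↔ (z^3 = 1 ∨ a*(a+1)*z^3 = 15 - 8*a + a^2) := by
  have hD' : (3*z^2*(5 - a + (1 + a)*z^3)) ≠ 0 := hD
  have hN : HasDerivAt (fun w : ℂ => 2*a*w^6 + (15 - a)*w^3 + (3 - a))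
      (2*a*(6*z^5) + (15 - a)*(3*z^2)) z := by
    have h1 : HasDerivAt (fun w : ℂ => w^6) ((6:ℕ) * z^5) z := by
      simpa using hasDerivAt_pow 6 z
    have h2 : HasDerivAt (fun w : ℂ => w^3) ((3:ℕ) * z^2) z := by
      simpa using hasDerivAt_pow 3 z
    have := ((h1.const_mul (2*a)).add (h2.const_mul (15 - a))).add_const (3 - a)
    exact this.congr_deriv (by push_cast; ring)
  have hDd : HasDerivAt (fun w : ℂ => 3*w^2*(5 - a + (1 + a)*w^3))
      (6*(5-a)*z + 15*(1+a)*z^4) z := by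
    have h2 : HasDerivAt (fun w : ℂ => w^2) ((2:ℕ) * z^1) z := hasDerivAt_pow 2 z
    have h5 : HasDerivAt (fun w : ℂ => w^5) ((5:ℕ) * z^4) z := hasDerivAt_pow 5 z
    have := (h2.const_mul (3*(5-a))).add (h5.const_mul (3*(1+a)))
    have heq : (fun w : ℂ => 3*w^2*(5 - a + (1 + a)*w^3))
        = fun w : ℂ => 3*(5-a)*w^2 + 3*(1+a)*w^5 := by
      funext w; ring
    rw [heq]
    exact this.congr_deriv (by push_cast; ring)
  have hRd := hN.div hDd hD'
  have hderiv : deriv (Ra a) z =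
      ((2*a*(6*z^5) + (15 - a)*(3*z^2)) * (3*z^2*(5 - a + (1 + a)*z^3))
        - (2*a*z^6 + (15 - a)*z^3 + (3 - a)) * (6*(5-a)*z + 15*(1+a)*z^4))
        / (3*z^2*(5 - a + (1 + a)*z^3))^2 := by
    have : Ra a = fun w : ℂ => (2*a*w^6 + (15 - a)*w^3 + (3 - a)) /
        (3*w^2*(5 - a + (1 + a)*w^3)) := rfl
    rw [this]
    exact hRd.deriv
  rw [hderiv, div_eq_zero_iff]
  have hsq : (3*z^2*(5 - a + (1 + a)*z^3))^2 ≠ 0 := pow_ne_zero _ hD'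
  simp only [hsq, or_false]
  have key : (2*a*(6*z^5) + (15 - a)*(3*z^2)) * (3*z^2*(5 - a + (1 + a)*z^3))
        - (2*a*z^6 + (15 - a)*z^3 + (3 - a)) * (6*(5-a)*z + 15*(1+a)*z^4)
      = 6*z*(z^3-1)^2*(a*(a+1)*z^3 - (15 - 8*a + a^2)) := by ring
  rw [key]
  constructor
  · intro h
    rcases mul_eq_zero.1 h with h1 | h2
    · rcases mul_eq_zero.1 h1 with h3 | h4
      · rcases mul_eq_zero.1 h3 with h5 | h6
        · exact absurd h5 (by norm_num)
        · exact absurd h6 hz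
      · left; have := pow_eq_zero_iff (n := 2) (by norm_num) |>.1 h4
        linear_combination this
    · right; linear_combination h2
  · rintro (h | h)
    · have : z^3 - 1 = 0 := by rw [h]; ring
      rw [this]; ring
    · have : a*(a+1)*z^3 - (15 - 8*a + a^2) = 0 := by rw [h]; ring
      rw [this]; ring
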